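/- If L_1, ..., L_n (n ≥ 3) are pairwise parallel lines in a linear space A, then there is a one-point extension A' = A ∪ {a} which is again a linear space, in which all the lines extending L_1,...,L_n pass through the new point a. -/

import Mathlib

open Set Function

universe u v w

/-- A linear space: a set of points with a family of lines, each line having at
least 2 points, such that any two distinct points lie on a common line and any
two distinct lines meet in at most one point. -/
structure LinSpace (X : Type u) where
  lines : Set (Set X)
  two_le : ∀ L ∈ lines, 2 ≤ L.encard
  exists_line : ∀ x y : X, x ≠ y → ∃ L ∈ lines, x ∈ L ∧ y ∈ L
  inter_subsingleton : ∀ L₁ ∈ lines, ∀ L₂ ∈ lines, L₁ ≠ L₂ → (L₁ ∩ L₂).Subsingleton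

/-- Collinearity of three points. -/
def Collin {X : Type u} (A : LinSpace X) (x y z : X) : Prop :=
  ∃ L ∈ A.lines, x ∈ L ∧ y ∈ L ∧ z ∈ L

/-- An embedding of linear spaces: an injection preserving and reflecting collinearity. -/
def IsEmbedding {X : Type u} {Y : Type v} (A : LinSpace X) (B : LinSpace Y) (f : X → Y) : Prop :=
  Function.Injective f ∧ ∀ x y z : X, Collin A x y z ↔ Collin B (f x) (f y) (f z)

/-- The linear space has degree at most `n`: every line has at most `n` points
and every point lies on at most `n` lines. -/
def DegLE {X : Type u} (A : LinSpace X) (n : ℕ) : Prop :=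
  (∀ L ∈ A.lines, L.encard ≤ (n : ℕ∞)) ∧
  ∀ p : X, {L | L ∈ A.lines ∧ p ∈ L}.encard ≤ (n : ℕ∞)

/-- There exist four points, no three of which are collinear. -/
def FourIndep {X : Type u} (A : LinSpace X) : Prop :=
  ∃ a b c d : X, a ≠ b ∧ a ≠ c ∧ a ≠ d ∧ b ≠ c ∧ b ≠ d ∧ c ≠ d ∧
    ∀ p q r : X, p ∈ ({a, b, c, d} : Set X) → q ∈ ({a, b, c, d} : Set X) →
      r ∈ ({a, b, c, d} : Set X) → p ≠ q → p ≠ r → q ≠ r → ¬ Collin A p q r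

/-- A projective plane: every two lines intersect, and there are four points no
three of which are collinear. -/
def IsProjPlane {X : Type u} (A : LinSpace X) : Prop :=
  (∀ L₁ ∈ A.lines, ∀ L₂ ∈ A.lines, (L₁ ∩ L₂).Nonempty) ∧ FourIndep A

/-- An automorphism of a linear space. -/
def IsAuto {X : Type u} (A : LinSpace X) (g : X → X) : Prop :=
  Function.Bijective g ∧ ∀ x y z : X, Collin A x y z ↔ Collin A (g x) (g y) (g z)

/-- A homogeneous linear space: every isomorphism between finite subspaces
extends to an automorphism. -/
def Homogeneous {X : Type u} (A : LinSpace X) : Prop :=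
  ∀ S : Set X, S.Finite → ∀ f : X → X, Set.InjOn f S →
    (∀ x ∈ S, ∀ y ∈ S, ∀ z ∈ S, (Collin A x y z ↔ Collin A (f x) (f y) (f z))) →
    ∃ g : X → X, IsAuto A g ∧ ∀ x ∈ S, g x = f x

/-- The Fano plane: the unique projective plane of order 2 (7 points, every line
has exactly 3 points). -/
def IsFano {X : Type u} (A : LinSpace X) : Prop :=
  IsProjPlane A ∧ (∀ L ∈ A.lines, L.encard = 3) ∧ (Set.univ : Set X).encard = 7

/-- The projective plane over F₃: the unique projective plane of order 3
(13 points, every line has exactly 4 points). -/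
def IsPG2_3 {X : Type u} (A : LinSpace X) : Prop :=
  IsProjPlane A ∧ (∀ L ∈ A.lines, L.encard = 4) ∧ (Set.univ : Set X).encard = 13

/-- The planar closure of a set `S` in a linear space `B`: the closure of `S`
under adding intersection points of pairs of lines spanned by the closure. -/
inductive PlanarCl {Y : Type v} (B : LinSpace Y) (S : Set Y) : Y → Prop
  | base {p : Y} (hp : p ∈ S) : PlanarCl B S p
  | inter {p : Y} (L₁ L₂ : Set Y) (p₁ q₁ p₂ q₂ : Y)
      (hL₁ : L₁ ∈ B.lines) (hL₂ : L₂ ∈ B.lines) (hne : L₁ ≠ L₂)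
      (hpq₁ : p₁ ≠ q₁) (hp₁ : p₁ ∈ L₁) (hq₁ : q₁ ∈ L₁)
      (hpq₂ : p₂ ≠ q₂) (hp₂ : p₂ ∈ L₂) (hq₂ : q₂ ∈ L₂)
      (cp₁ : PlanarCl B S p₁) (cq₁ : PlanarCl B S q₁)
      (cp₂ : PlanarCl B S p₂) (cq₂ : PlanarCl B S q₂)
      (hpL₁ : p ∈ L₁) (hpL₂ : p ∈ L₂) : PlanarCl B S p

/-- A planarisation: an embedding such that every point of the target lies in
the planar closure of the image (i.e. the target is obtained by successively
adding intersection points of pairs of lines). -/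
def IsPlanarisation {X : Type u} {Y : Type v} (A : LinSpace X) (B : LinSpace Y) (f : X → Y) : Prop :=
  IsEmbedding A B f ∧ ∀ y : Y, PlanarCl B (Set.range f) y

/-- An aplanar embedding: any two lines of `A` whose images intersect in `B`
already intersect in `A`. -/
def IsAplanar {X : Type u} {Y : Type v} (A : LinSpace X) (B : LinSpace Y) (f : X → Y) : Prop :=
  IsEmbedding A B f ∧
  ∀ L₁ ∈ A.lines, ∀ L₂ ∈ A.lines, ∀ M₁ ∈ B.lines, ∀ M₂ ∈ B.lines,
    f '' L₁ ⊆ M₁ → f '' L₂ ⊆ M₂ → (M₁ ∩ M₂).Nonempty → (L₁ ∩ L₂).Nonempty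

/-- The induced subspace on the set `S` of points of `B` is a projective plane:
any two induced lines (lines of `B` meeting `S` in at least two points) meet
inside `S`, and `S` contains four points no three collinear. -/
def IsProjPlaneOn {Y : Type v} (B : LinSpace Y) (S : Set Y) : Prop :=
  (∀ L₁ ∈ B.lines, ∀ L₂ ∈ B.lines,
      2 ≤ (L₁ ∩ S).encard → 2 ≤ (L₂ ∩ S).encard → (L₁ ∩ L₂ ∩ S).Nonempty) ∧
  ∃ a b c d : Y, a ∈ S ∧ b ∈ S ∧ c ∈ S ∧ d ∈ S ∧
    a ≠ b ∧ a ≠ c ∧ a ≠ d ∧ b ≠ c ∧ b ≠ d ∧ c ≠ d ∧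
    ∀ p q r : Y, p ∈ ({a, b, c, d} : Set Y) → q ∈ ({a, b, c, d} : Set Y) →
      r ∈ ({a, b, c, d} : Set Y) → p ≠ q → p ≠ r → q ≠ r → ¬ Collin B p q r

/-- If `L 0, …, L (n-1)` (with `n ≥ 3`) are pairwise parallel lines in a linear
space `A`, there is a one-point extension of `A` in which the lines extending
all the `L i` pass through the new point. -/
theorem stmt11 {X : Type u} (A : LinSpace X) (n : ℕ) (hn : 3 ≤ n)
    (L : Fin n → Set X) (hL : ∀ i, L i ∈ A.lines)
    (hpar : ∀ i j, i ≠ j → Disjoint (L i) (L j)) :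
    ∃ A' : LinSpace (X ⊕ Unit),
      IsEmbedding A A' Sum.inl ∧
      ∀ i : Fin n, ∃ M ∈ A'.lines, Sum.inl '' (L i) ⊆ M ∧ Sum.inr () ∈ M := by

  classical
  set a : X ⊕ Unit := Sum.inr () with ha
  have hinl : Function.Injective (Sum.inl : X → X ⊕ Unit) := Sum.inl_injective
  have hnotmem : ∀ s : Set X, a ∉ (Sum.inl '' s) := by
    rintro s ⟨x, -, h⟩; exact Sum.inl_ne_inr h
  have hne_a : ∀ x : X, (Sum.inl x : X ⊕ Unit) ≠ a := fun x h => Sum.inl_ne_inr h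
  have hLnonempty : ∀ i, (L i).Nonempty := by
    intro i
    rw [← Set.encard_ne_zero]
    intro h
    have := A.two_le (L i) (hL i)
    rw [h] at this
    exact absurd this (by norm_num)
  have hLinj : ∀ i j : Fin n, L i = L j → i = j := by
    intro i j hij
    by_contra hne
    have := (hpar i j hne)
    rw [hij] at this
    exact absurd (this.eq_bot) (by
      simp only [Set.inf_eq_inter, Set.inter_self]
      exact (hLnonempty j).ne_empty ∘ (by intro h; exact h))
  -- the new line set
  set lines' : Set (Set (X ⊕ Unit)) :=
    {N | (∃ M ∈ A.lines, (∀ i, M ≠ L i) ∧ N = Sum.inl '' M) ∨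
         (∃ i : Fin n, N = Sum.inl '' L i ∪ {a}) ∨
         (∃ x : X, (∀ i, x ∉ L i) ∧ N = {Sum.inl x, a})} with hlines
  have two_le' : ∀ N ∈ lines', 2 ≤ N.encard := by
    rintro N (⟨M, hM, -, rfl⟩ | ⟨i, rfl⟩ | ⟨x, -, rfl⟩)
    · rw [hinl.encard_image]
      exact A.two_le M hM
    · refine le_trans ?_ (Set.encard_mono Set.subset_union_left)
      rw [hinl.encard_image]
      exact A.two_le _ (hL i)
    · rw [Set.encard_pair (hne_a x)]
  have exists_line' : ∀ p q : X ⊕ Unit, p ≠ q → ∃ N ∈ lines', p ∈ N ∧ q ∈ N := by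
    have key : ∀ x y : X, x ≠ y → ∃ N ∈ lines', Sum.inl x ∈ N ∧ Sum.inl y ∈ N := by
      intro x y hxy
      obtain ⟨M, hM, hxM, hyM⟩ := A.exists_line x y hxy
      by_cases hML : ∃ i, M = L i
      · obtain ⟨i, rfl⟩ := hML
        exact ⟨Sum.inl '' L i ∪ {a}, Or.inr (Or.inl ⟨i, rfl⟩),
          Or.inl ⟨x, hxM, rfl⟩, Or.inl ⟨y, hyM, rfl⟩⟩
      · push_neg at hML
        exact ⟨Sum.inl '' M, Or.inl ⟨M, hM, hML, rfl⟩, ⟨x, hxM, rfl⟩, ⟨y, hyM, rfl⟩⟩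
    have keya : ∀ x : X, ∃ N ∈ lines', Sum.inl x ∈ N ∧ a ∈ N := by
      intro x
      by_cases hx : ∃ i, x ∈ L i
      · obtain ⟨i, hxi⟩ := hx
        exact ⟨Sum.inl '' L i ∪ {a}, Or.inr (Or.inl ⟨i, rfl⟩),
          Or.inl ⟨x, hxi, rfl⟩, Or.inr rfl⟩
      · push_neg at hx
        exact ⟨{Sum.inl x, a}, Or.inr (Or.inr ⟨x, hx, rfl⟩), Or.inl rfl, Or.inr rfl⟩
    rintro (x | u) (y | v) hpq
    · exact key x y (fun h => hpq (congrArg Sum.inl h))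
    · obtain rfl : v = () := rfl
      exact keya x
    · obtain rfl : u = () := rfl
      obtain ⟨N, hN, h1, h2⟩ := keya y
      exact ⟨N, hN, h2, h1⟩
    · exact absurd rfl hpq
  have inter_sub : ∀ N₁ ∈ lines', ∀ N₂ ∈ lines', N₁ ≠ N₂ → (N₁ ∩ N₂).Subsingleton := by
    have base : ∀ M₁ ∈ A.lines, ∀ M₂ ∈ A.lines, M₁ ≠ M₂ →
        ((Sum.inl '' M₁ : Set (X ⊕ Unit)) ∩ Sum.inl '' M₂).Subsingleton := by
      intro M₁ h₁ M₂ h₂ hne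
      rw [← Set.image_inter hinl]
      exact (A.inter_subsingleton M₁ h₁ M₂ h₂ hne).image _
    rintro N₁ (⟨M₁, hM₁, hML₁, rfl⟩ | ⟨i, rfl⟩ | ⟨x, hx, rfl⟩)
        N₂ (⟨M₂, hM₂, hML₂, rfl⟩ | ⟨j, rfl⟩ | ⟨y, hy, rfl⟩) hne
    · exact base M₁ hM₁ M₂ hM₂ (fun h => hne (congrArg _ h))
    · -- image vs extended
      refine (base M₁ hM₁ (L j) (hL j) (hML₁ j)).anti ?_
      rintro p ⟨hp1, (hp2 | hp2)⟩
      · exact ⟨hp1, hp2⟩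
      · exact absurd (hp2 ▸ hp1 : a ∈ Sum.inl '' M₁) (hnotmem _)
    · -- image vs pair
      refine Set.subsingleton_singleton.anti (t := {Sum.inl y}) ?_
      rintro p ⟨hp1, (hp2 | hp2)⟩
      · exact hp2
      · exact absurd (hp2 ▸ hp1 : a ∈ Sum.inl '' M₁) (hnotmem _)
    · -- extended vs image (symmetric)
      refine (base (L i) (hL i) M₂ hM₂ (fun h => hML₂ i h.symm)).anti ?_
      rintro p ⟨(hp1 | hp1), hp2⟩
      · exact ⟨hp1, hp2⟩
      · exact absurd (hp1 ▸ hp2 : a ∈ Sum.inl '' M₂) (hnotmem _)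
    · -- extended vs extended
      have hij : i ≠ j := by rintro rfl; exact hne rfl
      refine Set.subsingleton_singleton.anti (t := {a}) ?_
      rintro p ⟨(hp1 | hp1), (hp2 | hp2)⟩
      · obtain ⟨u, hu, rfl⟩ := hp1
        obtain ⟨v, hv, huv⟩ := hp2
        obtain rfl := hinl huv
        exact absurd (Set.mem_inter hv hu) ((hpar j i hij.symm).inter_eq ▸ id)
      · exact hp2
      · exact hp1
      · exact hp1
    · -- extended vs pair
      refine Set.subsingleton_singleton.anti (t := {a}) ?_
      rintro p ⟨(hp1 | hp1), (hp2 | hp2)⟩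
      · obtain ⟨u, hu, rfl⟩ := hp1
        obtain rfl := hinl hp2
        exact absurd hu (hy i)
      · exact hp2
      · exact hp1
      · exact hp1
    · -- pair vs image
      refine Set.subsingleton_singleton.anti (t := {Sum.inl x}) ?_
      rintro p ⟨(hp1 | hp1), hp2⟩
      · exact hp1
      · exact absurd (hp1 ▸ hp2 : a ∈ Sum.inl '' M₂) (hnotmem _)
    · -- pair vs extended
      refine Set.subsingleton_singleton.anti (t := {a}) ?_
      rintro p ⟨(hp1 | hp1), (hp2 | hp2)⟩
      · obtain ⟨u, hu, huv⟩ := hp2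
        rw [hp1] at huv
        obtain rfl := hinl huv
        exact absurd hu (hx j)
      · exact hp1 ▸ hp2
      · exact hp1
      · exact hp1
    · -- pair vs pair
      have hxy : x ≠ y := by rintro rfl; exact hne rfl
      refine Set.subsingleton_singleton.anti (t := {a}) ?_
      rintro p ⟨(hp1 | hp1), (hp2 | hp2)⟩
      · exact absurd (hinl (hp1.symm ▸ hp2 : (Sum.inl x : X ⊕ Unit) = Sum.inl y)) hxy
      · exact hp2
      · exact hp1
      · exact hp1
  refine ⟨⟨lines', two_le', exists_line', inter_sub⟩, ⟨hinl, ?_⟩, ?_⟩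
  · intro x y z
    constructor
    · rintro ⟨M, hM, hxM, hyM, hzM⟩
      by_cases hML : ∃ i, M = L i
      · obtain ⟨i, rfl⟩ := hML
        exact ⟨Sum.inl '' L i ∪ {a}, Or.inr (Or.inl ⟨i, rfl⟩),
          Or.inl ⟨x, hxM, rfl⟩, Or.inl ⟨y, hyM, rfl⟩, Or.inl ⟨z, hzM, rfl⟩⟩
      · push_neg at hML
        exact ⟨Sum.inl '' M, Or.inl ⟨M, hM, hML, rfl⟩,
          ⟨x, hxM, rfl⟩, ⟨y, hyM, rfl⟩, ⟨z, hzM, rfl⟩⟩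
    · rintro ⟨N, (⟨M, hM, -, rfl⟩ | ⟨i, rfl⟩ | ⟨w, hw, rfl⟩), hxN, hyN, hzN⟩
      · obtain ⟨x', hx', hx'e⟩ := hxN
        obtain ⟨y', hy', hy'e⟩ := hyN
        obtain ⟨z', hz', hz'e⟩ := hzN
        obtain rfl := hinl hx'e; obtain rfl := hinl hy'e; obtain rfl := hinl hz'e
        exact ⟨M, hM, hx', hy', hz'⟩
      · have get : ∀ w : X, Sum.inl w ∈ (Sum.inl '' L i ∪ {a} : Set (X ⊕ Unit)) → w ∈ L i := by
          rintro w (hw | hw)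
          · obtain ⟨w', hw', hwe⟩ := hw
            exact (hinl hwe) ▸ hw'
          · exact absurd hw (hne_a w)
        exact ⟨L i, hL i, get x hxN, get y hyN, get z hzN⟩
      · have get : ∀ u : X, Sum.inl u ∈ ({Sum.inl w, a} : Set (X ⊕ Unit)) → u = w := by
          rintro u (hu | hu)
          · exact hinl hu
          · exact absurd hu (hne_a u)
        rw [get x hxN, get y hyN, get z hzN]
        -- need Collin A w w w : pick any point distinct from w
        obtain ⟨p, hp⟩ := hLnonempty ⟨0, by omega⟩
        have hxp : w ≠ p := by rintro rfl; exact hw _ hp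
        obtain ⟨M, hM, hxM, -⟩ := A.exists_line w p hxp
        exact ⟨M, hM, hxM, hxM, hxM⟩
  · intro i
    exact ⟨Sum.inl '' L i ∪ {a}, Or.inr (Or.inl ⟨i, rfl⟩),
      Set.subset_union_left, Or.inr rfl⟩
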